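/- For every n, there is a digraph D with dichromatic number at least n, clique number at most 3, and no induced directed cycle of odd length at least 5. -/

import Mathlib

/-- Vertex set of the digraph `D (n+1)` from the paper (`Vtx n` = vertices of `D_{n+1}`). -/
def Vtx : ℕ → Type
  | 0 => Unit
  | (n+1) => (Fin (n+1) × Vtx n) ⊕ ((i : Fin (n+1)) → Vtx n)

/-- Edge relation of `D_{n+1}`. -/
def DEdge : (n : ℕ) → Vtx n → Vtx n → Prop
  | 0, _, _ => False
  | (n+1), Sum.inl (i, x), Sum.inl (j, y) => i = j ∧ DEdge n x y
  | (n+1), Sum.inl (i, x), Sum.inr T => T i = x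
  | (_+1), Sum.inr _, _ => False

/-- There is a directed walk of length `k` from `u` to `v`. -/
def WalkLen {V : Type*} (E : V → V → Prop) (u v : V) (k : ℕ) : Prop :=
  ∃ f : Fin (k+1) → V, f 0 = u ∧ f (Fin.last k) = v ∧
    ∀ i : Fin k, E (f i.castSucc) (f i.succ)

/-- `l` is a directed path (as a list of distinct vertices) from `u` to `v`. -/
def IsDPath {V : Type*} (E : V → V → Prop) (u v : V) (l : List V) : Prop :=
  l.Chain' E ∧ l.Nodup ∧ l.head? = some u ∧ l.getLast? = some v

/-- Positive edges of `D'`. -/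
def PosE {V : Type*} (E : V → V → Prop) (u v : V) : Prop :=
  ∃ k, k % 3 = 1 ∧ WalkLen E u v k

/-- Negative edges of `D'`. -/
def NegE {V : Type*} (E : V → V → Prop) (u v : V) : Prop :=
  ∃ k, k % 3 = 2 ∧ WalkLen E v u k

/-- Edge relation of `D_{n+1}'`. -/
def DEdge' (n : ℕ) (u v : Vtx n) : Prop :=
  PosE (DEdge n) u v ∨ NegE (DEdge n) u v

/-- Underlying undirected graph of a digraph. -/
def underSG {V : Type*} (E : V → V → Prop) : SimpleGraph V :=
  SimpleGraph.fromRel E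

/-- `G_{n+1}`, the underlying undirected graph of `D_{n+1}'`. -/
def Gn (n : ℕ) : SimpleGraph (Vtx n) := underSG (DEdge' n)

/-- A digraph is acyclic iff no vertex lies on a directed cycle. -/
def DAcyclic {V : Type*} (E : V → V → Prop) : Prop :=
  ∀ v : V, ¬ Relation.TransGen E v v

/-- `k`-dicolorability. -/
def Dicolorable {V : Type*} (E : V → V → Prop) (k : ℕ) : Prop :=
  ∃ f : V → Fin k, ∀ c : Fin k,
    DAcyclic (fun a b => E a b ∧ f a = c ∧ f b = c)

/-- `D` has an induced directed cycle of odd length at least 5. -/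
def HasInducedOddCycle {V : Type*} (E : V → V → Prop) : Prop :=
  ∃ m : ℕ, 5 ≤ m ∧ Odd m ∧ ∃ f : ZMod m → V, Function.Injective f ∧
    (∀ i, E (f i) (f (i+1))) ∧ (∀ i j, E (f i) (f j) → j = i + 1)
inductive MT : Type
  | node : ℕ → List MT → MT

namespace MT

def subs : MT → List MT
  | .node a ch => .node a ch :: (ch.attach.flatMap fun c => subs c.1)
decreasing_by
  have := List.sizeOf_lt_of_mem c.2
  simp only [MT.node.sizeOf_spec]
  omega

lemma mem_subs_iff {s : MT} {a : ℕ} {ch : List MT} :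
    s ∈ subs (.node a ch) ↔ s = .node a ch ∨ ∃ c ∈ ch, s ∈ subs c := by
  rw [subs]
  simp [List.mem_flatMap]

lemma self_mem_subs (t : MT) : t ∈ subs t := by
  cases t with
  | node a ch => rw [subs]; exact List.mem_cons_self

def children : MT → List MT
  | .node _ ch => ch

def tag : MT → ℕ
  | .node a _ => a

lemma sizeOf_lt_of_child {c t : MT} (h : c ∈ children t) : sizeOf c < sizeOf t := by
  cases t with
  | node a ch =>
    simp only [children] at h
    have := List.sizeOf_lt_of_mem h
    simp only [MT.node.sizeOf_spec]
    omega

lemma mem_subs_iff' {s t : MT} :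
    s ∈ subs t ↔ s = t ∨ ∃ c ∈ children t, s ∈ subs c := by
  cases t with
  | node a ch => exact mem_subs_iff

/-- strong induction on sizeOf -/
lemma strongOn {P : MT → Prop} (H : ∀ t, (∀ s : MT, sizeOf s < sizeOf t → P s) → P t) :
    ∀ t, P t := by
  have key : ∀ n : ℕ, ∀ t : MT, sizeOf t ≤ n → P t := by
    intro n
    induction n with
    | zero => intro t ht; exact H t (fun s hs => absurd (Nat.lt_of_lt_of_le hs ht) (Nat.not_lt_zero _))
    | succ n ih =>
      intro t ht
      exact H t (fun s hs => ih s (by omega))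
  exact fun t => key (sizeOf t) t le_rfl

lemma sizeOf_le_of_mem_subs {s t : MT} (h : s ∈ subs t) : sizeOf s ≤ sizeOf t := by
  induction t using strongOn with
  | H t ih =>
    rcases mem_subs_iff'.1 h with rfl | ⟨c, hc, hsc⟩
    · exact le_rfl
    · exact le_trans (ih c (sizeOf_lt_of_child hc) hsc) (le_of_lt (sizeOf_lt_of_child hc))

lemma mem_subs_trans {s u t : MT} (h1 : s ∈ subs u) (h2 : u ∈ subs t) : s ∈ subs t := by
  have key : ∀ t : MT, ∀ u s : MT, u ∈ subs t → s ∈ subs u → s ∈ subs t := by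
    refine strongOn ?_
    intro t ih u s h2 h1
    rcases mem_subs_iff'.1 h2 with rfl | ⟨c, hc, huc⟩
    · exact h1
    · exact mem_subs_iff'.2 (Or.inr ⟨c, hc, ih c (sizeOf_lt_of_child hc) u s huc h1⟩)
  exact key t u s h2 h1

lemma child_mem_subs {c t : MT} (h : c ∈ children t) : c ∈ subs t :=
  mem_subs_iff'.2 (Or.inr ⟨c, h, self_mem_subs c⟩)

lemma not_mem_subs_of_child {c t : MT} (h : c ∈ children t) : ¬ t ∈ subs c := by
  intro hmem
  have := sizeOf_le_of_mem_subs hmem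
  have := sizeOf_lt_of_child h
  omega

/-- disjointness of subtree sets -/
def Disj (a b : MT) : Prop := ∀ s, s ∈ subs a → s ∈ subs b → False

lemma Disj.symm {a b : MT} (h : Disj a b) : Disj b a := fun s h1 h2 => h s h2 h1

lemma disj_symmetric : Symmetric Disj := fun _ _ h => h.symm

/-- validity: children pairwise disjoint, recursively -/
inductive Valid : MT → Prop
  | mk (a : ℕ) (ch : List MT) (h1 : ∀ c ∈ ch, Valid c) (h2 : ch.Pairwise Disj) :
      Valid (.node a ch)

lemma Valid.children_valid {t : MT} (h : Valid t) : ∀ c ∈ children t, Valid c := by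
  cases h with
  | mk a ch h1 h2 => exact h1

lemma Valid.children_pairwise {t : MT} (h : Valid t) : (children t).Pairwise Disj := by
  cases h with
  | mk a ch h1 h2 => exact h2

/-- child determination -/
lemma child_determined {t w w' u : MT} (hv : Valid t) (hw : w ∈ children t)
    (hw' : w' ∈ children t) (h1 : u ∈ subs w) (h2 : u ∈ subs w') : w = w' := by
  by_contra hne
  have : Std.Symm Disj := ⟨fun _ _ h => disj_symmetric h⟩
  exact hv.children_pairwise.forall hw hw' hne u h1 h2

end MT

namespace WalkAux

variable {V : Type*} {E : V → V → Prop}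

lemma walk_zero (u : V) : WalkLen E u u 0 :=
  ⟨fun _ => u, rfl, rfl, fun i => i.elim0⟩

lemma walk_zero_eq {u v : V} (h : WalkLen E u v 0) : u = v := by
  obtain ⟨f, h0, hl, _⟩ := h
  rw [← h0, ← hl]
  rfl

lemma walk_one {u v : V} (h : E u v) : WalkLen E u v 1 := by
  refine ⟨fun i => if (i : ℕ) = 0 then u else v, by simp, by simp [Fin.last], ?_⟩
  intro i
  have : (i : ℕ) = 0 := by omega
  have h1 : ((i.castSucc : Fin 2) : ℕ) = 0 := by simp [this]
  have h2 : ((i.succ : Fin 2) : ℕ) = 1 := by simp [this]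
  simp only [h1, h2]
  simpa using h

lemma walk_snoc {u v w : V} {m : ℕ} (h : WalkLen E u v m) (he : E v w) :
    WalkLen E u w (m + 1) := by
  obtain ⟨f, h0, hl, hs⟩ := h
  refine ⟨fun i => if hi : (i : ℕ) < m + 1 then f ⟨i, hi⟩ else w, ?_, ?_, ?_⟩
  · simp only [Fin.val_zero, Nat.zero_lt_succ, dif_pos]
    rw [← h0]; rfl
  · simp only [Fin.val_last]
    rw [dif_neg (by omega)]
  · intro i
    simp only [Fin.coe_castSucc, Fin.val_succ]
    by_cases hi : (i : ℕ) < m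
    · rw [dif_pos (by omega), dif_pos (by omega)]
      have := hs ⟨i, hi⟩
      convert this using 2 <;> (apply Fin.ext; simp)
    · have hieq : (i : ℕ) = m := by omega
      rw [dif_pos (by omega), dif_neg (by omega)]
      have : (⟨(i:ℕ), by omega⟩ : Fin (m+1)) = Fin.last m := by
        apply Fin.ext; simp [hieq]
      rw [this, hl]
      exact he

lemma walk_unsnoc {u w : V} {m : ℕ} (h : WalkLen E u w (m + 1)) :
    ∃ v, WalkLen E u v m ∧ E v w := by
  obtain ⟨f, h0, hl, hs⟩ := h
  refine ⟨f ⟨m, by omega⟩, ⟨fun i => f ⟨i, by omega⟩, ?_, ?_, ?_⟩, ?_⟩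
  · rw [← h0]; rfl
  · rfl
  · intro i
    have := hs ⟨i, by omega⟩
    convert this using 2 <;> (apply Fin.ext; simp)
  · have := hs ⟨m, by omega⟩
    have e : ((⟨m, by omega⟩ : Fin (m+1)).succ) = Fin.last (m+1) := by
      apply Fin.ext; simp
    rw [e, hl] at this
    convert this using 2 <;> (apply Fin.ext; simp)

lemma walk_comp {u v w : V} {a b : ℕ} (h1 : WalkLen E u v a) (h2 : WalkLen E v w b) :
    WalkLen E u w (a + b) := by
  induction b generalizing w with
  | zero => rw [walk_zero_eq h2] at h1; exact h1
  | succ b ih =>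
    obtain ⟨x, hx, he⟩ := walk_unsnoc h2
    have := walk_snoc (ih hx) he
    convert this using 1 <;> omega

end WalkAux

/-! ## The digraph -/

namespace CE

open MT WalkAux

def VV : Type := {t : MT // MT.Valid t}

def Dedge (u v : VV) : Prop := u.1 ∈ MT.children v.1

lemma walk_mem_subs {u v : VV} {l : ℕ} (h : WalkLen Dedge u v l) : u.1 ∈ subs v.1 := by
  induction l generalizing v with
  | zero => rw [walk_zero_eq h]; exact self_mem_subs _
  | succ m ih =>
    obtain ⟨w, hw, he⟩ := walk_unsnoc h
    exact mem_subs_trans (ih hw) (child_mem_subs he)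

/-- key uniqueness of walk lengths -/
lemma walk_len_unique {u v : VV} {l l' : ℕ} (h : WalkLen Dedge u v l)
    (h' : WalkLen Dedge u v l') : l = l' := by
  have key : ∀ t : MT, ∀ (v : VV), v.1 = t → ∀ (u : VV) (l l' : ℕ),
      WalkLen Dedge u v l → WalkLen Dedge u v l' → l = l' := by
    refine MT.strongOn ?_
    intro t ih v hvt u l l' h h'
    match l, l' with
    | 0, 0 => rfl
    | 0, (m+1) =>
      exfalso
      have huv : u = v := walk_zero_eq h
      obtain ⟨w, hw, he⟩ := walk_unsnoc h'
      have h1 : u.1 ∈ subs w.1 := walk_mem_subs hw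
      rw [huv] at h1
      exact not_mem_subs_of_child he h1
    | (m+1), 0 =>
      exfalso
      have huv : u = v := walk_zero_eq h'
      obtain ⟨w, hw, he⟩ := walk_unsnoc h
      have h1 : u.1 ∈ subs w.1 := walk_mem_subs hw
      rw [huv] at h1
      exact not_mem_subs_of_child he h1
    | (m+1), (m'+1) =>
      obtain ⟨w, hw, he⟩ := walk_unsnoc h
      obtain ⟨w', hw', he'⟩ := walk_unsnoc h'
      have hww : w = w' := by
        apply Subtype.ext
        refine child_determined (t := v.1) (hvt ▸ v.2) he he' (walk_mem_subs hw) (walk_mem_subs hw')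
      subst hww
      have := ih w.1 (by rw [← hvt]; exact sizeOf_lt_of_child he) w rfl u m m' hw hw'
      omega
  exact key v.1 v rfl u l l' h h'

lemma walk_self_zero {u : VV} {l : ℕ} (h : WalkLen Dedge u u l) : l = 0 :=
  walk_len_unique h (walk_zero u)

end CE

namespace CE

open MT WalkAux

def EE (u v : VV) : Prop := PosE Dedge u v ∨ NegE Dedge u v

lemma EE_irrefl (v : VV) : ¬ EE v v := by
  rintro (⟨k, hk, hw⟩ | ⟨k, hk, hw⟩) <;>
  · have := walk_self_zero hw
    omega

lemma EE_asymm (u v : VV) (h : EE u v) : ¬ EE v u := by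
  intro h'
  rcases h with ⟨k, hk, hw⟩ | ⟨k, hk, hw⟩ <;> rcases h' with ⟨k', hk', hw'⟩ | ⟨k', hk', hw'⟩
  · have := walk_self_zero (walk_comp hw hw'); omega
  · have := walk_len_unique hw hw'; omega
  · have := walk_len_unique hw hw'; omega
  · have := walk_self_zero (walk_comp hw hw'); omega

end CE

namespace CE

open MT WalkAux

lemma cast_mod3 {k : ℕ} : ((k : ZMod 3)) = ((k % 3 : ℕ) : ZMod 3) := (ZMod.natCast_mod k 3).symm

/-- mod-3 "difference" relation for (possibly reversed) walks -/
def RelZ (u v : VV) (σ : ZMod 3) : Prop :=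
  (∃ l, WalkLen Dedge u v l ∧ (l : ZMod 3) = σ) ∨
  (∃ l, WalkLen Dedge v u l ∧ (l : ZMod 3) = -σ)

lemma RelZ.symm {u v : VV} {σ : ZMod 3} (h : RelZ u v σ) : RelZ v u (-σ) := by
  rcases h with ⟨l, hw, hc⟩ | ⟨l, hw, hc⟩
  · exact Or.inr ⟨l, hw, by rw [hc, neg_neg]⟩
  · exact Or.inl ⟨l, hw, hc⟩

lemma adj_relz {u v : VV} (h : EE u v ∨ EE v u) : ∃ σ : ZMod 3, σ ≠ 0 ∧ RelZ u v σ := by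
  rcases h with (⟨k, hk, hw⟩ | ⟨k, hk, hw⟩) | (⟨k, hk, hw⟩ | ⟨k, hk, hw⟩)
  · exact ⟨1, by decide, Or.inl ⟨k, hw, by rw [cast_mod3, hk]; decide⟩⟩
  · exact ⟨1, by decide, Or.inr ⟨k, hw, by rw [cast_mod3, hk]; decide⟩⟩
  · exact ⟨-1, by decide, Or.inr ⟨k, hw, by rw [cast_mod3, hk, neg_neg]; decide⟩⟩
  · exact ⟨-1, by decide, Or.inl ⟨k, hw, by rw [cast_mod3, hk]; decide⟩⟩

lemma relz_nonzero_pos {u v : VV} {l : ℕ} {σ : ZMod 3} (hw : WalkLen Dedge u v l)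
    (hc : (l : ZMod 3) = σ) (hσ : σ ≠ 0) : l ≠ 0 := by
  rintro rfl
  rw [Nat.cast_zero] at hc
  exact hσ hc.symm

lemma cocyc {u v w : VV} {σ τ ρ : ZMod 3} (h1 : RelZ u v σ) (h2 : RelZ v w τ)
    (h3 : RelZ u w ρ) (hσ : σ ≠ 0) (hτ : τ ≠ 0) : ρ = σ + τ := by
  rcases h1 with ⟨a, ha, hca⟩ | ⟨a, ha, hca⟩ <;>
    rcases h2 with ⟨b, hb, hcb⟩ | ⟨b, hb, hcb⟩ <;>
    rcases h3 with ⟨c, hc, hcc⟩ | ⟨c, hc, hcc⟩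
  · -- u→v, v→w, u→w
    have := walk_len_unique (walk_comp ha hb) hc
    subst this; push_cast at hcc; rw [hca, hcb] at hcc; exact hcc.symm
  · -- u→v, v→w, w→u : cycle
    exfalso
    have h0 := walk_self_zero (walk_comp (walk_comp ha hb) hc)
    have : a = 0 := by omega
    exact relz_nonzero_pos ha hca hσ this
  · -- u→v, w→v, u→w : u→w→v
    have := walk_len_unique (walk_comp hc hb) ha
    have hcast : ((c + b : ℕ) : ZMod 3) = (a : ZMod 3) := by rw [this]
    push_cast at hcast; rw [hca, hcb, hcc] at hcast; linear_combination hcast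
  · -- u→v, w→v, w→u : w→u→v
    have := walk_len_unique (walk_comp hc ha) hb
    have hcast : ((c + a : ℕ) : ZMod 3) = (b : ZMod 3) := by rw [this]
    push_cast at hcast; rw [hca, hcb, hcc] at hcast; linear_combination -hcast
  · -- v→u, v→w, u→w : v→u→w
    have := walk_len_unique (walk_comp ha hc) hb
    have hcast : ((a + c : ℕ) : ZMod 3) = (b : ZMod 3) := by rw [this]
    push_cast at hcast; rw [hca, hcb, hcc] at hcast; linear_combination hcast
  · -- v→u, v→w, w→u : v→w→u
    have := walk_len_unique (walk_comp hb hc) ha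
    have hcast : ((b + c : ℕ) : ZMod 3) = (a : ZMod 3) := by rw [this]
    push_cast at hcast; rw [hca, hcb, hcc] at hcast; linear_combination -hcast
  · -- v→u, w→v, u→w : cycle u→w→v→u
    exfalso
    have h0 := walk_self_zero (walk_comp (walk_comp hc hb) ha)
    have : b = 0 := by omega
    exact relz_nonzero_pos hb hcb (by simpa using hτ) this
  · -- v→u, w→v, w→u : w→v→u
    have := walk_len_unique (walk_comp hb ha) hc
    have hcast : ((b + a : ℕ) : ZMod 3) = (c : ZMod 3) := by rw [this]
    push_cast at hcast; rw [hca, hcb, hcc] at hcast; linear_combination hcast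

end CE

namespace CE

open MT WalkAux

def underSG' : SimpleGraph VV := underSG EE

lemma zmod3_contra : ∀ p q r : ZMod 3, p ≠ 0 → q ≠ 0 → r ≠ 0 →
    p + q ≠ 0 → q + r ≠ 0 → p + q + r ≠ 0 → False := by decide

lemma no_4_clique (s : Finset VV) : ¬ underSG'.IsNClique 4 s := by
  classical
  rintro ⟨hclique, hcard⟩
  rw [Finset.card_eq_succ] at hcard
  obtain ⟨a, t, hat, hs, ht3⟩ := hcard
  rw [Finset.card_eq_three] at ht3
  obtain ⟨b, c, d, hbc, hbd, hcd, rfl⟩ := ht3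
  have ha : a ∈ s := by rw [← hs]; simp
  have hb : b ∈ s := by rw [← hs]; simp
  have hc : c ∈ s := by rw [← hs]; simp
  have hd : d ∈ s := by rw [← hs]; simp
  have hab : a ≠ b := by rintro rfl; simp at hat
  have hac : a ≠ c := by rintro rfl; simp at hat
  have had : a ≠ d := by rintro rfl; simp at hat
  have adj : ∀ x y : VV, x ∈ s → y ∈ s → x ≠ y → (EE x y ∨ EE y x) := by
    intro x y hx hy hxy
    have := hclique hx hy hxy
    rw [underSG', underSG, SimpleGraph.fromRel_adj] at this
    exact this.2
  obtain ⟨p, hp, hrab⟩ := adj_relz (adj a b ha hb hab)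
  obtain ⟨q, hq, hrbc⟩ := adj_relz (adj b c hb hc hbc)
  obtain ⟨r, hr, hrcd⟩ := adj_relz (adj c d hc hd hcd)
  obtain ⟨x, hx, hrac⟩ := adj_relz (adj a c ha hc hac)
  obtain ⟨y, hy, hrbd⟩ := adj_relz (adj b d hb hd hbd)
  obtain ⟨z, hz, hrad⟩ := adj_relz (adj a d ha hd had)
  have e1 : x = p + q := cocyc hrab hrbc hrac hp hq
  have e2 : y = q + r := cocyc hrbc hrcd hrbd hq hr
  have e3 : z = p + y := cocyc hrab hrbd hrad hp hy
  refine zmod3_contra p q r hp hq hr (e1 ▸ hx) (e2 ▸ hy) ?_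
  rw [e2] at e3
  rw [e3] at hz
  intro hcon
  rw [← add_assoc] at hz
  exact hz hcon

end CE

namespace CE

open MT WalkAux

lemma no_odd_cycle : ¬ HasInducedOddCycle EE := by
  rintro ⟨m, hm5, hodd, f, hinj, hedges, hind⟩
  haveI : NeZero m := ⟨by omega⟩
  set s : ZMod m → Prop := fun i => PosE Dedge (f i) (f (i+1)) with hs
  have three_ne : ((3 : ℕ) : ZMod m) ≠ 0 := by
    intro h
    have := (ZMod.natCast_eq_zero_iff 3 m).1 h
    have := Nat.le_of_dvd (by norm_num) this
    omega
  have chord : ∀ i j : ZMod m, j = i + 2 → EE (f j) (f i) → False := by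
    intro i j hj hE
    have := hind j i hE
    rw [hj] at this
    apply three_ne
    have h3 : i + 2 + 1 = i + ((3:ℕ) : ZMod m) := by push_cast; ring
    rw [h3] at this
    have := this.symm
    nth_rewrite 2 [show i = i + 0 by ring] at this
    exact (add_left_cancel this)
  have case1 : ∀ i : ZMod m, s i → s (i + 1) → False := by
    intro i h1 h2
    obtain ⟨l1, hl1, w1⟩ := h1
    obtain ⟨l2, hl2, w2⟩ := h2
    have wc := walk_comp w1 w2
    refine chord i (i + 2) rfl (Or.inr ⟨l1 + l2, by omega, ?_⟩)
    have : i + 1 + 1 = i + 2 := by ring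
    rw [this] at wc
    exact wc
  have case2 : ∀ i : ZMod m, ¬ s i → ¬ s (i + 1) → False := by
    intro i h1 h2
    have e1 := hedges i
    have e2 := hedges (i + 1)
    have n1 : NegE Dedge (f i) (f (i+1)) := by
      rcases e1 with hp | hn
      · exact absurd hp h1
      · exact hn
    have n2 : NegE Dedge (f (i+1)) (f (i+1+1)) := by
      rcases e2 with hp | hn
      · exact absurd hp h2
      · exact hn
    obtain ⟨l1, hl1, w1⟩ := n1
    obtain ⟨l2, hl2, w2⟩ := n2
    have wc := walk_comp w2 w1
    refine chord i (i + 2) rfl (Or.inl ⟨l2 + l1, by omega, ?_⟩)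
    have : i + 1 + 1 = i + 2 := by ring
    rw [this] at wc
    exact wc
  have alt : ∀ i : ZMod m, s (i + 1) ↔ ¬ s i := by
    intro i
    constructor
    · intro h2 h1; exact case1 i h1 h2
    · intro h1; by_contra h2; exact case2 i h1 h2
  have key : ∀ n : ℕ, (s ((n : ℕ) : ZMod m) ↔ (if Even n then s 0 else ¬ s 0)) := by
    intro n
    induction n with
    | zero => simp
    | succ n ih =>
      have hc : ((n + 1 : ℕ) : ZMod m) = ((n : ℕ) : ZMod m) + 1 := by push_cast; ring
      rw [hc, alt, ih]
      by_cases he : Even n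
      · simp [he, Nat.even_add_one]
      · simp [he, Nat.even_add_one, not_not]
  have hkm := key m
  rw [ZMod.natCast_self] at hkm
  have hnoteven : ¬ Even m := by
    rw [Nat.even_iff, Nat.odd_iff.1 hodd]; omega
  rw [if_neg hnoteven] at hkm
  exact (iff_not_self hkm)

end CE

namespace CE

open MT WalkAux

section Dicol

variable {k : ℕ} (f : VV → Fin k)

/-- avoidance-supply of witnesses of colour c -/
def WitS (c : Fin k) : Prop :=
  ∀ A : List MT, ∃ w : VV, f w = c ∧ ∀ a ∈ A, MT.Disj w.1 a

/-- avoidance-supply of armed pairs of colour c -/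
def PairS (c : Fin k) : Prop :=
  ∀ A : List MT, ∃ x y : VV, ∃ l : ℕ, f x = c ∧ f y = c ∧ WalkLen Dedge y x l ∧
    l % 3 = 1 ∧ ∀ a ∈ A, MT.Disj x.1 a

/-- a "structured" vertex: avoids `A`, has witnesses for `C` and armed pairs for `S`
among/below its children -/
def StructZ (S C : Finset (Fin k)) (A : List MT) (z : VV) : Prop :=
  (∀ a ∈ A, MT.Disj z.1 a) ∧
  (∀ c ∈ C, ∃ w : VV, w.1 ∈ z.1.children ∧ f w = c) ∧
  (∀ c ∈ S, ∃ x y : VV, ∃ l : ℕ, x.1 ∈ z.1.children ∧ f x = c ∧ f y = c ∧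
      WalkLen Dedge y x l ∧ l % 3 = 1)

/-- "good": no monochromatic composable pair of ≡1 walks -/
def Good : Prop :=
  ∀ (y x z : VV) (l1 l2 : ℕ), WalkLen Dedge y x l1 → l1 % 3 = 1 →
    WalkLen Dedge x z l2 → l2 % 3 = 1 → f y = f x → f x = f z → False

lemma fire {S C : Finset (Fin k)} {A : List MT} {z : VV} (hgood : Good f)
    (hz : StructZ f S C A z) (hfz : f z ∈ S) : False := by
  obtain ⟨x, y, l, hxch, hfx, hfy, hw, hl⟩ := hz.2.2 (f z) hfz
  exact hgood y x z l 1 hw hl (walk_one hxch) (by norm_num) (hfy.trans hfx.symm) hfx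

lemma foldr_max_bound {b : ℕ} {l : List ℕ} (h : b ∈ l) : b ≤ l.foldr max 0 := by
  induction l with
  | nil => simp at h
  | cons x xs ih =>
    rcases List.mem_cons.1 h with rfl | h'
    · simp [List.foldr]
    · simp only [List.foldr]
      exact le_trans (ih h') (le_max_right _ _)

/-- generic assembly of a disjoint children list from avoidance supplies -/
lemma assemble {P : Fin k → MT → Prop} :
    ∀ (L : List (Fin k)),
    (∀ c ∈ L, ∀ A : List MT, ∃ t : MT, P c t ∧ MT.Valid t ∧ ∀ a ∈ A, MT.Disj t a) →
    ∀ A : List MT, ∃ ch : List MT, ch.Pairwise MT.Disj ∧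
      (∀ t ∈ ch, MT.Valid t ∧ ∀ a ∈ A, MT.Disj t a) ∧
      (∀ c ∈ L, ∃ t ∈ ch, P c t) := by
  intro L
  induction L with
  | nil => intro _ A; exact ⟨[], List.Pairwise.nil, by simp, by simp⟩
  | cons c L' ih =>
    intro hsup A
    obtain ⟨ch', hpw, hval, hpay⟩ := ih (fun c' hc' => hsup c' (List.mem_cons_of_mem _ hc')) A
    obtain ⟨t, hPt, hvt, hdt⟩ := hsup c List.mem_cons_self (A ++ ch')
    refine ⟨t :: ch', ?_, ?_, ?_⟩
    · refine List.Pairwise.cons ?_ hpw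
      intro t' ht'
      exact hdt t' (List.mem_append_right _ ht')
    · intro t' ht'
      rcases List.mem_cons.1 ht' with rfl | h'
      · exact ⟨hvt, fun a ha => hdt a (List.mem_append_left _ ha)⟩
      · exact hval t' h'
    · intro c' hc'
      rcases List.mem_cons.1 hc' with rfl | h'
      · exact ⟨t, List.mem_cons_self, hPt⟩
      · obtain ⟨t', ht', hPt'⟩ := hpay c' h'
        exact ⟨t', List.mem_cons_of_mem _ ht', hPt'⟩

lemma exists_struct {S C : Finset (Fin k)} (hS : ∀ c ∈ S, PairS f c)
    (hC : ∀ c ∈ C, WitS f c) (A : List MT) : ∃ z : VV, StructZ f S C A z := by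
  -- witnesses
  obtain ⟨chW, hWpw, hWval, hWpay⟩ := assemble (P := fun c t => ∃ w : VV, w.1 = t ∧ f w = c)
    C.toList
    (by
      intro c hc A'
      obtain ⟨w, hfw, hdw⟩ := hC c (Finset.mem_toList.1 hc) A'
      exact ⟨w.1, ⟨w, rfl, hfw⟩, w.2, hdw⟩) A
  -- pairs
  obtain ⟨chP, hPpw, hPval, hPpay⟩ := assemble
    (P := fun c t => ∃ x y : VV, ∃ l : ℕ, x.1 = t ∧ f x = c ∧ f y = c ∧
      WalkLen Dedge y x l ∧ l % 3 = 1)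
    S.toList
    (by
      intro c hc A'
      obtain ⟨x, y, l, hfx, hfy, hw, hl, hdx⟩ := hS c (Finset.mem_toList.1 hc) A'
      exact ⟨x.1, ⟨x, y, l, rfl, hfx, hfy, hw, hl⟩, x.2, hdx⟩) (A ++ chW)
  set ch := chW ++ chP with hch
  have hchpw : ch.Pairwise MT.Disj := by
    rw [hch, List.pairwise_append]
    exact ⟨hWpw, hPpw, fun a ha b hb => ((hPval b hb).2 a (List.mem_append_right _ ha)).symm⟩
  have hchval : ∀ t ∈ ch, MT.Valid t := by
    intro t ht
    rcases List.mem_append.1 ht with h | h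
    · exact (hWval t h).1
    · exact (hPval t h).1
  have hchavoid : ∀ t ∈ ch, ∀ a ∈ A, MT.Disj t a := by
    intro t ht
    rcases List.mem_append.1 ht with h | h
    · exact (hWval t h).2
    · exact fun a ha => (hPval t h).2 a (List.mem_append_left _ ha)
  -- fresh tag
  set tg := ((A.flatMap MT.subs).map MT.tag).foldr max 0 + 1 with htg
  set zt : MT := MT.node tg ch with hzt
  have hzval : MT.Valid zt := MT.Valid.mk tg ch hchval hchpw
  have hznotin : ∀ a ∈ A, zt ∉ MT.subs a := by
    intro a ha hmem
    have h1 : zt ∈ A.flatMap MT.subs := List.mem_flatMap.2 ⟨a, ha, hmem⟩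
    have h2 : MT.tag zt ∈ (A.flatMap MT.subs).map MT.tag := List.mem_map_of_mem h1
    have := foldr_max_bound h2
    rw [hzt] at this
    simp only [MT.tag] at this
    omega
  refine ⟨⟨zt, hzval⟩, ?_, ?_, ?_⟩
  · -- avoids A
    intro a ha s hs1 hs2
    rcases MT.mem_subs_iff'.1 hs1 with rfl | ⟨c, hc, hsc⟩
    · exact hznotin a ha hs2
    · have hcch : c ∈ ch := hc
      exact hchavoid c hcch a ha s hsc hs2
  · -- witnesses for C
    intro c hc
    obtain ⟨t, ht, w, hwt, hfw⟩ := hWpay c (Finset.mem_toList.2 hc)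
    refine ⟨w, ?_, hfw⟩
    show w.1 ∈ ch
    rw [hwt]
    exact List.mem_append_left _ ht
  · -- pairs for S
    intro c hc
    obtain ⟨t, ht, x, y, l, hxt, hfx, hfy, hw, hl⟩ := hPpay c (Finset.mem_toList.2 hc)
    refine ⟨x, y, l, ?_, hfx, hfy, hw, hl⟩
    show x.1 ∈ ch
    rw [hxt]
    exact List.mem_append_right _ ht

end Dicol

end CE

namespace CE

open MT WalkAux

lemma structZ_mono {k : ℕ} {f : VV → Fin k} {S C : Finset (Fin k)} {A A' : List MT} {z : VV}
    (hz : StructZ f S C A z) (hsub : ∀ a ∈ A', a ∈ A) : StructZ f S C A' z :=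
  ⟨fun a ha => hz.1 a (hsub a ha), hz.2.1, hz.2.2⟩

lemma main_ind {k : ℕ} {f : VV → Fin k} (hgood : Good f) :
    ∀ N : ℕ, ∀ S C : Finset (Fin k), Disjoint S C →
      2 * k ≤ 2 * S.card + C.card + N →
      (∀ c ∈ S, PairS f c) → (∀ c ∈ C, WitS f c) → False := by
  intro N
  induction N with
  | zero =>
    intro S C hdisj hcard hS hC
    have hSC : S.card + C.card ≤ k := by
      have h1 : (S ∪ C).card = S.card + C.card := Finset.card_union_of_disjoint hdisj
      have h2 : (S ∪ C).card ≤ Fintype.card (Fin k) := Finset.card_le_univ _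
      rw [Fintype.card_fin] at h2
      omega
    have hSk : S.card = k := by
      have := Finset.card_le_univ S
      rw [Fintype.card_fin] at this
      omega
    have hSuniv : S = Finset.univ := Finset.eq_univ_of_card S (by rw [hSk, Fintype.card_fin])
    obtain ⟨z, hz⟩ := exists_struct f hS hC []
    exact fire f hgood hz (hSuniv ▸ Finset.mem_univ (f z))
  | succ N ih =>
    intro S C hdisj hcard hS hC
    by_cases hex : ∃ c : Fin k, c ∉ S ∧ ∀ A : List MT, ∃ z : VV, StructZ f S C A z ∧ f z = c
    · obtain ⟨c, hcS, hsup⟩ := hex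
      by_cases hcC : c ∈ C
      · -- new armed colour
        have hP : PairS f c := by
          intro A
          obtain ⟨z, hz, hfz⟩ := hsup A
          obtain ⟨w, hw, hfw⟩ := hz.2.1 c hcC
          exact ⟨z, w, 1, hfz, hfw, walk_one hw, by norm_num, hz.1⟩
        refine ih (insert c S) (C.erase c) ?_ ?_ ?_ ?_
        · rw [Finset.disjoint_left]
          intro x hx hx'
          rcases Finset.mem_insert.1 hx with rfl | hxS
          · exact (Finset.notMem_erase x C) hx'
          · exact (Finset.disjoint_left.1 hdisj hxS) (Finset.mem_of_mem_erase hx')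
        · rw [Finset.card_insert_of_notMem hcS, Finset.card_erase_of_mem hcC]
          have hC1 : 1 ≤ C.card := Finset.card_pos.2 ⟨c, hcC⟩
          omega
        · intro c' hc'
          rcases Finset.mem_insert.1 hc' with rfl | hc'S
          · exact hP
          · exact hS c' hc'S
        · intro c' hc'
          exact hC c' (Finset.mem_of_mem_erase hc')
      · -- new witnessed colour
        have hW : WitS f c := by
          intro A
          obtain ⟨z, hz, hfz⟩ := hsup A
          exact ⟨z, hfz, hz.1⟩
        refine ih S (insert c C) ?_ ?_ hS ?_
        · rw [Finset.disjoint_right]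
          intro x hx hx'
          rcases Finset.mem_insert.1 hx with rfl | hxC
          · exact hcS hx'
          · exact (Finset.disjoint_left.1 hdisj hx') hxC
        · rw [Finset.card_insert_of_notMem hcC]
          omega
        · intro c' hc'
          rcases Finset.mem_insert.1 hc' with rfl | hc'C
          · exact hW
          · exact hC c' hc'C
    · -- no such colour: direct contradiction
      push_neg at hex
      have hchoice : ∀ c : Fin k, ∃ A : List MT,
          (c ∉ S → ∀ z : VV, StructZ f S C A z → f z ≠ c) := by
        intro c
        by_cases hc : c ∉ S
        · obtain ⟨A, hA⟩ := hex c hc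
          exact ⟨A, fun _ z hz => hA z hz⟩
        · exact ⟨[], fun h => absurd h hc⟩
      choose g hg using hchoice
      set AA := (List.finRange k).flatMap g with hAA
      obtain ⟨z, hz⟩ := exists_struct f hS hC AA
      by_cases hfzS : f z ∈ S
      · exact fire f hgood hz hfzS
      · refine hg (f z) hfzS z ?_ rfl
        refine structZ_mono hz ?_
        intro a ha
        exact List.mem_flatMap.2 ⟨f z, List.mem_finRange _, ha⟩

end CE

namespace CE

open MT WalkAux

lemma not_dicolorable (k : ℕ) : ¬ Dicolorable EE k := by
  rintro ⟨f, hf⟩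
  have hgood : Good f := by
    intro y x z l1 l2 w1 h1 w2 h2 e1 e2
    have hEyx : EE y x := Or.inl ⟨l1, h1, w1⟩
    have hExz : EE x z := Or.inl ⟨l2, h2, w2⟩
    have hEzy : EE z y := Or.inr ⟨l1 + l2, by omega, walk_comp w1 w2⟩
    have hcyc : Relation.TransGen (fun a b => EE a b ∧ f a = f x ∧ f b = f x) y y := by
      refine Relation.TransGen.head ⟨hEyx, e1, rfl⟩ ?_
      refine Relation.TransGen.head ⟨hExz, rfl, e2.symm.trans rfl⟩ ?_
      exact Relation.TransGen.single ⟨hEzy, e2.symm, e1⟩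
    exact hf (f x) y hcyc
  exact main_ind hgood (2 * k) ∅ ∅ (Finset.disjoint_empty_right _) (by simp)
    (by simp) (by simp)

end CE

/-- there is a (simple) digraph with dichromatic number at least `n`,
clique number at most 3, and no induced directed cycle of odd length at least 5. -/
theorem main_digraph (n : ℕ) :
    ∃ (V : Type) (E : V → V → Prop),
      (∀ v, ¬ E v v) ∧ (∀ u v, E u v → ¬ E v u) ∧
      (∀ k, Dicolorable E k → n ≤ k) ∧
      (∀ s : Finset V, ¬ (underSG E).IsNClique 4 s) ∧
      ¬ HasInducedOddCycle E := by
  refine ⟨CE.VV, CE.EE, CE.EE_irrefl, CE.EE_asymm, ?_, ?_, CE.no_odd_cycle⟩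
  · intro k hk
    exact absurd hk (CE.not_dicolorable k)
  · intro s
    exact CE.no_4_clique s
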